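/- Let κ be a regular uncountable cardinal, λ a cardinal, and X = K_{λ,λ} the complete bipartite graph with parts A and B each of size λ. If λ is at least the density of the poset (stat_κ, ⊆) of stationary subsets of κ ordered by inclusion, then the stationary list colorability SList(X, κ) fails: there is a list function L : V → stat_κ admitting no good choice function. -/

import Mathlib

open Cardinal Set

/-- C is a club (closed unbounded) subset of the ordinal o. -/
def IsClubIn (C : Set Ordinal) (o : Ordinal) : Prop :=
  C ⊆ Set.Iio o ∧ (∀ a < o, ∃ b ∈ C, a ≤ b ∧ b < o) ∧
  ∀ a < o, 0 < a → (∀ b < a, ∃ x ∈ C, b < x ∧ x < a) → a ∈ C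

/-- S is a stationary subset of the ordinal o. -/
def IsStationaryIn (S : Set Ordinal) (o : Ordinal) : Prop :=
  S ⊆ Set.Iio o ∧ ∀ C, IsClubIn C o → (S ∩ C).Nonempty

lemma club_next {C : Set Ordinal} {κ : Cardinal} (hunc : ℵ₀ < κ)
    (hC : IsClubIn C κ.ord) : ∀ a : Ordinal, ∃ x, a < κ.ord → (x ∈ C ∧ a < x ∧ x < κ.ord) := by
  intro a
  by_cases ha : a < κ.ord
  · have hlim : Order.IsSuccLimit κ.ord := Cardinal.isSuccLimit_ord hunc.le
    obtain ⟨b, hb, hab, hbo⟩ := hC.2.1 (a + 1) (hlim.succ_lt ha)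
    exact ⟨b, fun _ => ⟨hb, (Order.lt_succ a).trans_le hab, hbo⟩⟩
  · exact ⟨0, fun h => absurd h ha⟩

lemma club_stationary {C : Set Ordinal} {κ : Cardinal} (hreg : κ.IsRegular) (hunc : ℵ₀ < κ)
    (hC : IsClubIn C κ.ord) : IsStationaryIn C κ.ord := by
  refine ⟨hC.1, fun D hD => ?_⟩
  obtain ⟨F, hF⟩ := Classical.axiom_of_choice (club_next hunc hC)
  obtain ⟨G, hG⟩ := Classical.axiom_of_choice (club_next hunc hD)
  have h0 : (0 : Ordinal) < κ.ord := by
    rw [← Cardinal.ord_zero]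
    exact Cardinal.ord_lt_ord.2 (hreg.pos)
  -- h : ℕ → Ordinal, h 0 ∈ C, h (n+1) = F (G (h n))
  set h : ℕ → Ordinal := fun n => Nat.rec (F 0) (fun _ ih => F (G ih)) n with hh
  have hinv : ∀ n, h n ∈ C ∧ h n < κ.ord := by
    intro n
    induction n with
    | zero => exact ⟨(hF 0 h0).1, (hF 0 h0).2.2⟩
    | succ n ih =>
      have hg := hG (h n) ih.2
      have hf := hF (G (h n)) hg.2.2
      exact ⟨hf.1, hf.2.2⟩
  have hstep : ∀ n, h n < G (h n) ∧ G (h n) < h (n + 1) ∧ G (h n) ∈ D := by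
    intro n
    have hg := hG (h n) (hinv n).2
    have hf := hF (G (h n)) hg.2.2
    exact ⟨hg.2.1, hf.2.1, hg.1⟩
  have hmono : StrictMono h := strictMono_nat_of_lt_succ fun n =>
    (hstep n).1.trans (hstep n).2.1
  set s : Ordinal := ⨆ n, h n with hs
  have hslt : s < κ.ord := by
    rw [hs]
    exact Cardinal.iSup_lt_ord_lift_of_isRegular hreg (by simpa using hunc) fun n => (hinv n).2
  have hns : ∀ n, h n < s := fun n => (hmono (Nat.lt_succ_self n)).trans_le (Ordinal.le_iSup h (n+1))
  have hlt : ∀ b < s, ∃ n, b < h n := by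
    intro b hb
    by_contra hcon
    push_neg at hcon
    exact absurd (Ordinal.iSup_le hcon) (not_le.2 hb)
  have hspos : 0 < s := (zero_le (a := h 0)).trans_lt (hns 0)
  have hsC : s ∈ C := by
    refine hC.2.2 s hslt hspos fun b hb => ?_
    obtain ⟨n, hn⟩ := hlt b hb
    exact ⟨h n, (hinv n).1, hn, hns n⟩
  have hsD : s ∈ D := by
    refine hD.2.2 s hslt hspos fun b hb => ?_
    obtain ⟨n, hn⟩ := hlt b hb
    exact ⟨G (h n), (hstep n).2.2, hn.trans_le (hstep n).1.le, (hstep n).2.1.trans (hns (n+1))⟩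
  exact ⟨s, hsC, hsD⟩

/-- If λ ≥ den(stat_κ), then SList(K_{λ,λ}, κ) fails. -/
theorem slist_fails_of_dense {A B : Type} (κ lam : Cardinal)
    (hreg : κ.IsRegular) (hunc : ℵ₀ < κ)
    (hA : #A = lam) (hB : #B = lam)
    (hden : ∃ (I : Type) (d : I → Set Ordinal), #I ≤ lam ∧
      (∀ i, IsStationaryIn (d i) κ.ord) ∧
      ∀ S, IsStationaryIn S κ.ord → ∃ i, d i ⊆ S) :
    ∃ L : A ⊕ B → Set Ordinal, (∀ v, IsStationaryIn (L v) κ.ord) ∧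
      ¬ ∃ c : A ⊕ B → Ordinal, (∀ v, c v ∈ L v) ∧
        ∀ v w, (completeBipartiteGraph A B).Adj v w → c v ≠ c w := by
  obtain ⟨I, d, hI, hstat, hdense⟩ := hden
  have h0 : (0 : Ordinal) < κ.ord := by
    rw [← Cardinal.ord_zero]; exact Cardinal.ord_lt_ord.2 hreg.pos
  have hio : IsStationaryIn (Set.Iio κ.ord) κ.ord := by
    refine ⟨subset_rfl, fun C hC => ?_⟩
    obtain ⟨b, hb, _, hbo⟩ := hC.2.1 0 h0
    exact ⟨b, hbo, hb⟩
  obtain ⟨i0, -⟩ := hdense _ hio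
  have hIne : Nonempty I := ⟨i0⟩
  obtain ⟨eA⟩ : Nonempty (I ↪ A) := Cardinal.le_def _ _ |>.1 (hA ▸ hI)
  obtain ⟨eB⟩ : Nonempty (I ↪ B) := Cardinal.le_def _ _ |>.1 (hB ▸ hI)
  set f : A → I := Function.invFun eA with hf
  set g : B → I := Function.invFun eB with hg
  have hfs : ∀ i, ∃ a, f a = i := fun i => ⟨eA i, Function.leftInverse_invFun eA.injective i⟩
  have hgs : ∀ i, ∃ b, g b = i := fun i => ⟨eB i, Function.leftInverse_invFun eB.injective i⟩
  refine ⟨Sum.elim (fun a => d (f a)) (fun b => d (g b)), fun v => ?_, ?_⟩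
  · cases v with
    | inl a => exact hstat (f a)
    | inr b => exact hstat (g b)
  rintro ⟨c, hc, hgood⟩
  -- X := range of c on left side
  set X : Set Ordinal := Set.range (fun a => c (Sum.inl a)) with hX
  have hXmeets : ∀ S, IsStationaryIn S κ.ord → (X ∩ S).Nonempty := by
    intro S hS
    obtain ⟨i, hi⟩ := hdense S hS
    obtain ⟨a, ha⟩ := hfs i
    refine ⟨c (Sum.inl a), ⟨a, rfl⟩, hi ?_⟩
    have := hc (Sum.inl a)
    rwa [Sum.elim_inl, ha] at this
  have hXstat : IsStationaryIn X κ.ord := by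
    refine ⟨?_, fun C hC => ?_⟩
    · rintro x ⟨a, rfl⟩
      exact (hstat (f a)).1 (hc (Sum.inl a))
    · obtain ⟨x, hx1, hx2⟩ := hXmeets C (club_stationary hreg hunc hC)
      exact ⟨x, hx1, hx2⟩
  obtain ⟨j, hj⟩ := hdense X hXstat
  obtain ⟨b, hb⟩ := hgs j
  have hcb : c (Sum.inr b) ∈ X := by
    have := hc (Sum.inr b)
    rw [Sum.elim_inr, hb] at this
    exact hj this
  obtain ⟨a, ha⟩ := hcb
  exact hgood (Sum.inl a) (Sum.inr b) (by simp) ha
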